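/- Let f : [r, R] → ℝ be convex with r < R. Then for every t ∈ [r, R], ((R−t) f(r) + (t−r) f(R))/(R−r) − f(t) ≤ [1 + (2/(R−r))·|t − (r+R)/2|]·[ (f(r)+f(R))/2 − f((r+R)/2) ] ≤ 2·[ (f(r)+f(R))/2 − f((r+R)/2) ]. -/

import Mathlib

theorem secant_defect_bound
    (r R : ℝ) (hrR : r < R) (f : ℝ → ℝ)
    (hf : ConvexOn ℝ (Set.Icc r R) f) (t : ℝ) (ht : t ∈ Set.Icc r R) :
    ((R - t) * f r + (t - r) * f R) / (R - r) - f t ≤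
      (1 + (2 / (R - r)) * |t - (r + R) / 2|) *
        ((f r + f R) / 2 - f ((r + R) / 2)) ∧
    (1 + (2 / (R - r)) * |t - (r + R) / 2|) *
        ((f r + f R) / 2 - f ((r + R) / 2)) ≤
      2 * ((f r + f R) / 2 - f ((r + R) / 2)) := by
  obtain ⟨htr, htR⟩ := ht
  have hRr : (0:ℝ) < R - r := by linarith
  set m := (r + R) / 2 with hm
  have hmr : r ≤ m := by rw [hm]; linarith
  have hmR : m ≤ R := by rw [hm]; linarith
  have hrmem : r ∈ Set.Icc r R := ⟨le_refl r, le_of_lt hrR⟩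
  have hRmem : R ∈ Set.Icc r R := ⟨le_of_lt hrR, le_refl R⟩
  have htmem : t ∈ Set.Icc r R := ⟨htr, htR⟩
  have hmmem : m ∈ Set.Icc r R := ⟨hmr, hmR⟩
  have hD : f m ≤ (f r + f R) / 2 := by
    have h := hf.2 hrmem hRmem (by norm_num : (0:ℝ) ≤ 1/2)
      (by norm_num : (0:ℝ) ≤ 1/2) (by norm_num)
    have hpt : (1/2 : ℝ) • r + (1/2 : ℝ) • R = m := by
      rw [hm, smul_eq_mul, smul_eq_mul]; ring
    rw [hpt] at h
    simp only [smul_eq_mul] at h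
    linarith
  constructor
  · rcases le_or_gt t m with hc | hc
    · -- t ≤ m
      have hRt : (0:ℝ) < R - t := by
        have : m < R := by rw [hm]; linarith
        linarith
      have ha : (0:ℝ) ≤ (R - m) / (R - t) := by
        apply div_nonneg <;> linarith
      have hb : (0:ℝ) ≤ (m - t) / (R - t) := by
        apply div_nonneg <;> linarith
      have hab : (R - m) / (R - t) + (m - t) / (R - t) = 1 := by
        field_simp
        ring
      have key := hf.2 htmem hRmem ha hb hab
      have hpt : ((R - m) / (R - t)) • t + ((m - t) / (R - t)) • R = m := by
        rw [smul_eq_mul, smul_eq_mul]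
        field_simp
        ring
      rw [hpt] at key
      simp only [smul_eq_mul] at key
      have key' : (R - t) * f m ≤ (R - m) * f t + (m - t) * f R := by
        have h1 : (R - m) / (R - t) * f t + (m - t) / (R - t) * f R
            = ((R - m) * f t + (m - t) * f R) / (R - t) := by ring
        rw [h1, le_div_iff₀ hRt] at key
        linarith [key]
      have habs : |t - m| = m - t := by rw [abs_of_nonpos (by linarith)]; ring
      rw [habs]
      rw [← mul_le_mul_iff_of_pos_right hRr]
      have hcoef : (1 + 2 / (R - r) * (m - t)) * ((f r + f R) / 2 - f m) * (R - r)
          = (R - r + 2 * (m - t)) * ((f r + f R) / 2 - f m) := by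
        field_simp
      rw [hcoef]
      have hlhs : (((R - t) * f r + (t - r) * f R) / (R - r) - f t) * (R - r)
          = (R - t) * f r + (t - r) * f R - f t * (R - r) := by
        field_simp
      rw [hlhs]
      rw [hm] at key' ⊢
      nlinarith [key']
    · -- t > m
      have htr' : (0:ℝ) < t - r := by
        have : r < m := by rw [hm]; linarith
        linarith
      have ha : (0:ℝ) ≤ (t - m) / (t - r) := by
        apply div_nonneg <;> linarith
      have hb : (0:ℝ) ≤ (m - r) / (t - r) := by
        apply div_nonneg <;> linarith
      have hab : (t - m) / (t - r) + (m - r) / (t - r) = 1 := by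
        field_simp
        ring
      have key := hf.2 hrmem htmem ha hb hab
      have hpt : ((t - m) / (t - r)) • r + ((m - r) / (t - r)) • t = m := by
        rw [smul_eq_mul, smul_eq_mul]
        field_simp
        ring
      rw [hpt] at key
      simp only [smul_eq_mul] at key
      have key' : (t - r) * f m ≤ (t - m) * f r + (m - r) * f t := by
        have h1 : (t - m) / (t - r) * f r + (m - r) / (t - r) * f t
            = ((t - m) * f r + (m - r) * f t) / (t - r) := by ring
        rw [h1, le_div_iff₀ htr'] at key
        linarith [key]
      have habs : |t - m| = t - m := abs_of_pos (by linarith)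
      rw [habs]
      rw [← mul_le_mul_iff_of_pos_right hRr]
      have hcoef : (1 + 2 / (R - r) * (t - m)) * ((f r + f R) / 2 - f m) * (R - r)
          = (R - r + 2 * (t - m)) * ((f r + f R) / 2 - f m) := by
        field_simp
      rw [hcoef]
      have hlhs : (((R - t) * f r + (t - r) * f R) / (R - r) - f t) * (R - r)
          = (R - t) * f r + (t - r) * f R - f t * (R - r) := by
        field_simp
      rw [hlhs]
      rw [hm] at key' ⊢
      nlinarith [key']
  · have habs : |t - m| ≤ (R - r) / 2 := by
      rw [abs_le, hm]
      constructor <;> linarith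
    have h1 : 2 / (R - r) * |t - m| ≤ 2 / (R - r) * ((R - r) / 2) :=
      mul_le_mul_of_nonneg_left habs (by positivity)
    have h2 : 2 / (R - r) * ((R - r) / 2) = 1 := by field_simp
    have hc0 : 0 ≤ 2 / (R - r) * |t - m| := by positivity
    nlinarith [hD, hc0, h1, h2]
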